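/- Let n ≥ 4 be an integer, m > 0 a real number, R₀ = (m/2)^(1/(n−2)), and let λ be a real number with 4λ + (n−2)(n−4) ≥ 0. Then for every continuously differentiable function φ : [R₀,∞) → ℝ with compact support, ∫_{R₀}^{∞} φ'(r)²·r^(n−2) dr ≥ ∫_{R₀}^{∞} ( V(r) − λ/r² )·φ(r)²·r^(n−2) dr, where V(r) = (m(n-1)/(2r^n))·(2r^(n-2)/(m + 2r^(n-2)))². -/

import Mathlib

open Real MeasureTheory Set

/-- The potential `V(r) = (m (n-1)/(2 r^n)) (2 r^(n-2)/(m + 2 r^(n-2)))^2`. -/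
noncomputable def schwarzPot (n : ℕ) (m : ℝ) : ℝ → ℝ :=
  fun r => m * ((n : ℝ) - 1) / (2 * r ^ n) * (2 * r ^ (n - 2) / (m + 2 * r ^ (n - 2))) ^ 2

noncomputable def cfun (ν m s : ℝ) : ℝ :=
  (-2*(ν-3)*(m+2*s)^2 + m*((ν+3)*m + 2*(ν-3)*s)) / (4*(m+2*s)^2)

noncomputable def cder (ν m s : ℝ) : ℝ :=
  ((-8*(ν-3)*(m+2*s) + 2*m*(ν-3)) * (4*(m+2*s)^2)
    - (-2*(ν-3)*(m+2*s)^2 + m*((ν+3)*m + 2*(ν-3)*s)) * (16*(m+2*s))) / (4*(m+2*s)^2)^2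

noncomputable def vfun (ν m : ℝ) (k : ℕ) (r : ℝ) : ℝ := cfun ν m (r^k) / r

noncomputable def vder (ν m : ℝ) (k : ℕ) (r : ℝ) : ℝ :=
  (cder ν m (r^k) * ((k:ℝ)*r^(k-1)) * r - cfun ν m (r^k) * 1) / r^2

lemma hasDerivAt_cfun (ν m s : ℝ) (hA : m + 2*s ≠ 0) :
    HasDerivAt (cfun ν m) (cder ν m s) s := by
  have h1 : HasDerivAt (fun s : ℝ => m + 2*s) 2 s := by
    simpa using ((hasDerivAt_id s).const_mul (2:ℝ)).const_add m
  have hnum : HasDerivAt (fun s : ℝ => -2*(ν-3)*(m+2*s)^2 + m*((ν+3)*m + 2*(ν-3)*s))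
      (-8*(ν-3)*(m+2*s) + 2*m*(ν-3)) s := by
    have h2 := (h1.pow 2).const_mul (-2*(ν-3))
    have h3 : HasDerivAt (fun s : ℝ => m*((ν+3)*m + 2*(ν-3)*s)) (m*(2*(ν-3))) s := by
      simpa using (((hasDerivAt_id s).const_mul (2*(ν-3))).const_add ((ν+3)*m)).const_mul m
    exact (h2.add h3).congr_deriv (by push_cast; ring)
  have hden : HasDerivAt (fun s : ℝ => 4*(m+2*s)^2) (16*(m+2*s)) s := by
    have := (h1.pow 2).const_mul (4:ℝ)
    exact this.congr_deriv (by push_cast; ring)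
  have hA4 : 4*(m+2*s)^2 ≠ 0 := by
    intro h
    exact hA (by nlinarith [sq_nonneg (m+2*s)])
  exact hnum.div hden hA4

lemma hasDerivAt_vfun (ν m : ℝ) (k : ℕ) (r : ℝ) (hr : 0 < r) (hA : m + 2*r^k ≠ 0) :
    HasDerivAt (vfun ν m k) (vder ν m k r) r := by
  have hc : HasDerivAt (fun r : ℝ => cfun ν m (r^k)) (cder ν m (r^k) * ((k:ℝ)*r^(k-1))) r :=
    (hasDerivAt_cfun ν m (r^k) hA).comp r (hasDerivAt_pow k r)
  exact hc.div (hasDerivAt_id r) hr.ne'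

lemma polyKey (ν m u : ℝ) (hν : 4 ≤ ν) (hm : 0 < m) (hu : 0 ≤ u) :
    (-12*ν^2+48*ν-32)*m^4 + (-28*ν^2+132*ν-160)*m^3*u + (-19*ν^2+126*ν-191)*m^2*u^2
      + (-4*ν^2+36*ν-72)*m*u^3 - 4*u^4 ≤ 0 := by
  have hm4 : (0:ℝ) < m^4 := by positivity
  have hmu3 : (0:ℝ) ≤ m^3*u := by positivity
  have hmu2 : (0:ℝ) ≤ m^2*u^2 := by positivity
  have hmu1 : (0:ℝ) ≤ m*u^3 := by positivity
  have hu4 : (0:ℝ) ≤ u^4 := by positivity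
  rcases le_or_gt 6 ν with h6 | h6
  · have hd0 : (-12*ν^2+48*ν-32) * m^4 ≤ 0 :=
      mul_nonpos_of_nonpos_of_nonneg (by nlinarith) hm4.le
    have hd1 : (-28*ν^2+132*ν-160) * (m^3*u) ≤ 0 :=
      mul_nonpos_of_nonpos_of_nonneg (by nlinarith [sq_nonneg (14*ν-33)]) hmu3
    have hd2 : (-19*ν^2+126*ν-191) * (m^2*u^2) ≤ 0 :=
      mul_nonpos_of_nonpos_of_nonneg (by nlinarith [sq_nonneg (ν-6)]) hmu2
    have hd3 : (-4*ν^2+36*ν-72) * (m*u^3) ≤ 0 :=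
      mul_nonpos_of_nonpos_of_nonneg
        (by nlinarith [mul_nonneg (by linarith : (0:ℝ) ≤ ν - 6) (by linarith : (0:ℝ) ≤ ν - 3)]) hmu1
    nlinarith [hd0, hd1, hd2, hd3]
  · have hd0 : (-12*ν^2+48*ν-32) * m^4 ≤ -32 * m^4 :=
      mul_le_mul_of_nonneg_right (by nlinarith) hm4.le
    have hd1 : (-28*ν^2+132*ν-160) * (m^3*u) ≤ -80 * (m^3*u) :=
      mul_le_mul_of_nonneg_right
        (by nlinarith [mul_nonneg (by linarith : (0:ℝ) ≤ ν-4) (by linarith : (0:ℝ) ≤ 28*ν-20)]) hmu3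
    have hd2 : (-19*ν^2+126*ν-191) * (m^2*u^2) ≤ 9 * (m^2*u^2) :=
      mul_le_mul_of_nonneg_right
        (by nlinarith [mul_nonneg (by linarith : (0:ℝ) ≤ ν-4) (by linarith : (0:ℝ) ≤ 19*ν-50)]) hmu2
    have hd3 : (-4*ν^2+36*ν-72) * (m*u^3) ≤ 9 * (m*u^3) :=
      mul_le_mul_of_nonneg_right (by nlinarith [sq_nonneg (2*ν-9)]) hmu1
    have key : -32*m^4 - 80*(m^3*u) + 9*(m^2*u^2) + 9*(m*u^3) - 4*u^4 ≤ 0 := by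
      nlinarith [sq_nonneg (128*u^2 - 144*m*u - 225*m^2), mul_nonneg hmu3 hu, pow_pos hm 4]
    nlinarith [hd0, hd1, hd2, hd3]

lemma master (ν m s : ℝ) (hν : 4 ≤ ν) (hm : 0 < m) (hs : m ≤ 2*s) :
    (ν-2)*s*cder ν m s + (cfun ν m s)^2 + (ν-3)*(cfun ν m s)
      + 2*m*(ν-1)*s/(m+2*s)^2 + (ν-2)*(ν-4)/4 ≤ 0 := by
  have hA : (0:ℝ) < m + 2*s := by linarith
  have key := polyKey ν m (2*s-m) hν hm (by linarith)
  have hE : (ν-2)*s*cder ν m s + (cfun ν m s)^2 + (ν-3)*(cfun ν m s)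
      + 2*m*(ν-1)*s/(m+2*s)^2 + (ν-2)*(ν-4)/4
      = ((-12*ν^2+48*ν-32)*m^4 + (-28*ν^2+132*ν-160)*m^3*(2*s-m)
        + (-19*ν^2+126*ν-191)*m^2*(2*s-m)^2 + (-4*ν^2+36*ν-72)*m*(2*s-m)^3
        - 4*(2*s-m)^4) / (16*(m+2*s)^4) := by
    unfold cfun cder
    field_simp
    ring
  rw [hE]
  exact div_nonpos_of_nonpos_of_nonneg key (by positivity)

lemma integrableOn_Ioi_of_cut {f : ℝ → ℝ} {a b : ℝ} (hab : a ≤ b)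
    (hc : ContinuousOn f (Icc a b)) (h0 : ∀ r, b < r → f r = 0) :
    IntegrableOn f (Ioi a) := by
  have h1 : IntegrableOn f (Ioc a b) := hc.integrableOn_Icc.mono_set Ioc_subset_Icc_self
  have h2 : IntegrableOn f (Ioi b) :=
    (integrableOn_zero (μ := volume)).congr_fun (fun x hx => (h0 x hx).symm) measurableSet_Ioi
  rw [← Ioc_union_Ioi_eq_Ioi hab]
  exact h1.union h2


lemma ptwise_le (ν lam r a b p d V pk : ℝ) (hr : 0 < r) (hpk : 0 ≤ pk)
    (hric : b + a^2 + (ν-2)*a/r + V - lam/r^2 ≤ 0) :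
    (V - lam/r^2)*p^2*pk + (b*p^2*pk + a*(2*p*d)*pk + a*p^2*((ν-2)*pk/r)) ≤ d^2*pk := by
  have hmul := mul_nonpos_of_nonpos_of_nonneg hric (mul_nonneg (sq_nonneg p) hpk)
  have hsq : 0 ≤ (d-a*p)^2*pk := mul_nonneg (sq_nonneg _) hpk
  have hid : d^2*pk - ((V-lam/r^2)*p^2*pk + (b*p^2*pk + a*(2*p*d)*pk + a*p^2*((ν-2)*pk/r)))
      = (d-a*p)^2*pk - (b+a^2+(ν-2)*a/r+V-lam/r^2)*(p^2*pk) := by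
    field_simp
    ring
  linarith


/-- radial stability inequality: let `n ≥ 4`, `m > 0`,
`R₀ = (m/2)^(1/(n-2))` and `λ` with `4λ + (n-2)(n-4) ≥ 0`. Then for every continuously
differentiable `φ : [R₀,∞) → ℝ` with compact support,
`∫_{R₀}^∞ φ'(r)² r^(n-2) dr ≥ ∫_{R₀}^∞ (V(r) - λ/r²) φ(r)² r^(n-2) dr`. -/
theorem radial_stability_inequality (n : ℕ) (hn : 4 ≤ n) (m : ℝ) (hm : 0 < m) (lam : ℝ)
    (hlam : 0 ≤ 4 * lam + ((n : ℝ) - 2) * ((n : ℝ) - 4)) :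
    ∀ φ : ℝ → ℝ,
      ContDiffOn ℝ 1 φ (Set.Ici ((m / 2) ^ ((1 : ℝ) / ((n : ℝ) - 2)))) →
      (∃ R₁ : ℝ, ∀ r : ℝ, R₁ ≤ r → φ r = 0) →
      ∫ r in Set.Ioi ((m / 2) ^ ((1 : ℝ) / ((n : ℝ) - 2))),
          (schwarzPot n m r - lam / r ^ 2) * φ r ^ 2 * r ^ (n - 2)
        ≤ ∫ r in Set.Ioi ((m / 2) ^ ((1 : ℝ) / ((n : ℝ) - 2))),
            deriv φ r ^ 2 * r ^ (n - 2) := by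
  intro φ hφ hsupp
  obtain ⟨R₁, hR₁⟩ := hsupp
  set R₀ : ℝ := (m / 2) ^ ((1 : ℝ) / ((n : ℝ) - 2)) with hR₀def
  set k : ℕ := n - 2 with hkdef
  have hν : (4:ℝ) ≤ (n:ℝ) := by exact_mod_cast hn
  have hk2 : 2 ≤ k := by omega
  have hkcast : ((k:ℕ):ℝ) = (n:ℝ) - 2 := by
    have : ((n - 2 : ℕ) : ℝ) = (n:ℝ) - 2 := by
      push_cast [Nat.cast_sub (by omega : 2 ≤ n)]; ring
    simpa [hkdef] using this
  have hR₀pos : 0 < R₀ := by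
    rw [hR₀def]; exact rpow_pos_of_pos (by positivity) _
  have hR₀k : R₀ ^ k = m / 2 := by
    rw [hR₀def, ← rpow_natCast ((m/2) ^ ((1:ℝ)/((n:ℝ)-2))) k, ← rpow_mul (by positivity : (0:ℝ) ≤ m/2)]
    rw [hkcast, one_div, inv_mul_cancel₀ (by linarith : (n:ℝ) - 2 ≠ 0), rpow_one]
  have hhor : ∀ r : ℝ, R₀ ≤ r → m ≤ 2 * r ^ k := by
    intro r hr
    have := pow_le_pow_left₀ hR₀pos.le hr k
    rw [hR₀k] at this
    linarith
  have hApos : ∀ r : ℝ, R₀ ≤ r → (0:ℝ) < m + 2 * r ^ k := by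
    intro r hr; nlinarith [hhor r hr]
  set R₁' : ℝ := max R₁ (R₀ + 1) with hR₁'def
  have hR₀R₁ : R₀ ≤ R₁' := le_trans (by linarith) (le_max_right _ _)
  have hφ0 : ∀ r : ℝ, R₁' ≤ r → φ r = 0 := fun r hr =>
    hR₁ r (le_trans (le_max_left _ _) hr)
  set D : ℝ → ℝ := derivWithin φ (Set.Ici R₀) with hDdef
  have hφcont : ContinuousOn φ (Set.Ici R₀) := hφ.continuousOn
  have hDcont : ContinuousOn D (Set.Ici R₀) :=
    hφ.continuousOn_derivWithin (uniqueDiffOn_Ici R₀) le_rfl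
  have hder : ∀ r ∈ Set.Ioi R₀, HasDerivAt φ (D r) r := by
    intro r hr
    have hmem : Set.Ici R₀ ∈ nhds r := Ici_mem_nhds hr
    have hdiff : DifferentiableAt ℝ φ r :=
      ((hφ.differentiableOn one_ne_zero) r (le_of_lt hr : R₀ ≤ r)).differentiableAt hmem
    have : D r = deriv φ r := derivWithin_of_mem_nhds hmem
    rw [this]
    exact hdiff.hasDerivAt
  have hD0 : ∀ r : ℝ, R₁' < r → D r = 0 := by
    intro r hr
    have hrR₀ : R₀ < r := lt_of_le_of_lt hR₀R₁ hr
    have h1 : D r = deriv φ r := derivWithin_of_mem_nhds (Ici_mem_nhds hrR₀)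
    have h2 : φ =ᶠ[nhds r] fun _ => (0:ℝ) :=
      Filter.eventually_of_mem (Ioi_mem_nhds hr) (fun y hy => hφ0 y (le_of_lt hy))
    rw [h1, h2.deriv_eq]
    simp
  -- the supersolution
  set v : ℝ → ℝ := vfun (n:ℝ) m k with hvdef
  set vd : ℝ → ℝ := vder (n:ℝ) m k with hvddef
  have hvd : ∀ r ∈ Set.Ioi R₀, HasDerivAt v (vd r) r := by
    intro r hr
    exact hasDerivAt_vfun (n:ℝ) m k r (lt_trans hR₀pos hr) (ne_of_gt (hApos r (le_of_lt hr)))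
  have hvcont : ContinuousOn v (Set.Ici R₀) := by
    rw [hvdef]; unfold vfun cfun
    apply ContinuousOn.div
    · apply ContinuousOn.div
      · fun_prop
      · fun_prop
      · intro r hr
        have := hApos r hr
        positivity
    · fun_prop
    · intro r hr
      exact ne_of_gt (lt_of_lt_of_le hR₀pos hr)
  have hvdcont : ContinuousOn vd (Set.Ici R₀) := by
    rw [hvddef]; unfold vder cder cfun
    apply ContinuousOn.div
    · apply ContinuousOn.sub
      · apply ContinuousOn.mul
        · apply ContinuousOn.mul
          · apply ContinuousOn.div
            · fun_prop
            · fun_prop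
            · intro r hr
              have := hApos r hr
              positivity
          · fun_prop
        · fun_prop
      · apply ContinuousOn.mul
        · apply ContinuousOn.div
          · fun_prop
          · fun_prop
          · intro r hr
            have := hApos r hr
            positivity
        · fun_prop
    · fun_prop
    · intro r hr
      have : (0:ℝ) < r := lt_of_lt_of_le hR₀pos hr
      positivity
  -- Riccati inequality
  have hkr : ∀ r : ℝ, 0 < r → ((k:ℕ):ℝ) * r ^ (k-1) = ((n:ℝ)-2) * r ^ k / r := by
    intro r hr
    rw [eq_div_iff (ne_of_gt hr), mul_assoc, ← pow_succ,
      (by omega : k - 1 + 1 = k), hkcast]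
  have hric : ∀ r : ℝ, R₀ ≤ r →
      vd r + (v r)^2 + ((n:ℝ)-2) * v r / r + schwarzPot n m r - lam / r^2 ≤ 0 := by
    intro r hr
    have hrpos : (0:ℝ) < r := lt_of_lt_of_le hR₀pos hr
    have hA : (0:ℝ) < m + 2 * r ^ k := hApos r hr
    have hs : m ≤ 2 * r ^ k := hhor r hr
    have hSP : schwarzPot n m r = 2*m*((n:ℝ)-1)*(r^k)/(r^2*(m+2*(r^k))^2) := by
      unfold schwarzPot
      rw [show n = k + 2 by omega, Nat.add_sub_cancel, pow_add]
      have h1 : r ^ k ≠ 0 := by positivity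
      field_simp
    have hmaster := master (n:ℝ) m (r^k) hν hm hs
    have heq : vd r + (v r)^2 + ((n:ℝ)-2) * v r / r + schwarzPot n m r - lam / r^2
        = (((n:ℝ)-2)*(r^k)*cder (n:ℝ) m (r^k) + (cfun (n:ℝ) m (r^k))^2
          + ((n:ℝ)-3)*(cfun (n:ℝ) m (r^k))
          + 2*m*((n:ℝ)-1)*(r^k)/(m+2*(r^k))^2 - lam) / r^2 := by
      rw [hSP, hvddef, hvdef]
      unfold vder vfun
      rw [hkr r hrpos]
      field_simp
      ring
    rw [heq]
    apply div_nonpos_of_nonpos_of_nonneg _ (by positivity)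
    linarith
  -- boundary sign
  have hvR₀ : v R₀ ≤ 0 := by
    rw [hvdef]; unfold vfun
    apply div_nonpos_of_nonpos_of_nonneg _ hR₀pos.le
    rw [hR₀k]
    unfold cfun
    apply div_nonpos_of_nonpos_of_nonneg _ (by positivity)
    nlinarith [sq_nonneg m, hm]
  -- the function G and its derivative
  set G : ℝ → ℝ := fun r => v r * φ r ^ 2 * r ^ k with hGdef
  set g' : ℝ → ℝ := fun r => vd r * φ r ^ 2 * r ^ k + v r * (2 * φ r * D r) * r ^ k
      + v r * φ r ^ 2 * (((k:ℕ):ℝ) * r ^ (k-1)) with hg'def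
  have hG : ∀ r ∈ Set.Ioi R₀, HasDerivAt G (g' r) r := by
    intro r hr
    have h1 := ((hvd r hr).mul ((hder r hr).pow 2)).mul (hasDerivAt_pow k r)
    exact h1.congr_deriv (by simp only [hg'def, Pi.mul_apply, Pi.pow_apply]; push_cast; ring)
  have hGcont : ContinuousOn G (Set.Ici R₀) := by
    apply (hvcont.mul (hφcont.pow 2)).mul
    fun_prop
  have hg'cont : ContinuousOn g' (Set.Ici R₀) := by
    apply ContinuousOn.add
    apply ContinuousOn.add
    · exact (hvdcont.mul (hφcont.pow 2)).mul (by fun_prop)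
    · exact (hvcont.mul (by exact (continuousOn_const.mul hφcont).mul hDcont)).mul (by fun_prop)
    · exact (hvcont.mul (hφcont.pow 2)).mul (by fun_prop)
  have hg'zero : ∀ r : ℝ, R₁' < r → g' r = 0 := by
    intro r hr
    simp [hg'def, hφ0 r hr.le, hD0 r hr]
  have hg'int : IntegrableOn g' (Set.Ioi R₀) :=
    integrableOn_Ioi_of_cut hR₀R₁ (hg'cont.mono Icc_subset_Ici_self) hg'zero
  have hGtend : Filter.Tendsto G Filter.atTop (nhds 0) := by
    apply Filter.Tendsto.congr' _ (tendsto_const_nhds (x := (0:ℝ)))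
    filter_upwards [Filter.eventually_ge_atTop R₁'] with r hr
    simp [hGdef, hφ0 r hr]
  have hFTC : ∫ r in Set.Ioi R₀, g' r = 0 - G R₀ :=
    integral_Ioi_of_hasDerivAt_of_tendsto
      (hGcont R₀ self_mem_Ici) hG hg'int hGtend
  have hGR₀ : G R₀ ≤ 0 := by
    simp only [hGdef]
    apply mul_nonpos_of_nonpos_of_nonneg _ (by positivity)
    exact mul_nonpos_of_nonpos_of_nonneg hvR₀ (by positivity)
  -- integrands
  set f₁ : ℝ → ℝ := fun r => (schwarzPot n m r - lam / r ^ 2) * φ r ^ 2 * r ^ k with hf₁def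
  set f₂ : ℝ → ℝ := fun r => D r ^ 2 * r ^ k with hf₂def
  have hVcont : ContinuousOn (fun r => schwarzPot n m r - lam / r ^ 2) (Set.Ici R₀) := by
    unfold schwarzPot
    apply ContinuousOn.sub
    · apply ContinuousOn.mul
      · apply ContinuousOn.div
        · fun_prop
        · fun_prop
        · intro r hr
          have : (0:ℝ) < r := lt_of_lt_of_le hR₀pos hr
          positivity
      · apply ContinuousOn.pow
        apply ContinuousOn.div
        · fun_prop
        · fun_prop
        · intro r hr
          exact ne_of_gt (hApos r hr)
    · apply ContinuousOn.div
      · fun_prop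
      · fun_prop
      · intro r hr
        have : (0:ℝ) < r := lt_of_lt_of_le hR₀pos hr
        positivity
  have hf₁int : IntegrableOn f₁ (Set.Ioi R₀) := by
    apply integrableOn_Ioi_of_cut hR₀R₁ _ (fun r hr => by simp [hf₁def, hφ0 r hr.le])
    exact ((hVcont.mul (hφcont.pow 2)).mul (by fun_prop)).mono Icc_subset_Ici_self
  have hf₂int : IntegrableOn f₂ (Set.Ioi R₀) := by
    apply integrableOn_Ioi_of_cut hR₀R₁ _ (fun r hr => by simp [hf₂def, hD0 r hr])
    exact ((hDcont.pow 2).mul (by fun_prop)).mono Icc_subset_Ici_self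
  -- pointwise inequality
  have hptwise : ∀ r ∈ Set.Ioi R₀, f₁ r + g' r ≤ f₂ r := by
    intro r hr
    have hrpos : (0:ℝ) < r := lt_of_lt_of_le hR₀pos (le_of_lt hr)
    have h1 := hric r (le_of_lt hr)
    simp only [hf₁def, hf₂def, hg'def]
    rw [hkr r hrpos]
    exact ptwise_le (n:ℝ) lam r (v r) (vd r) (φ r) (D r) (schwarzPot n m r) (r^k)
      hrpos (by positivity) (by linarith)
  -- conclusion
  have hcongr : ∫ r in Set.Ioi R₀, deriv φ r ^ 2 * r ^ k = ∫ r in Set.Ioi R₀, f₂ r := by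
    apply setIntegral_congr_fun measurableSet_Ioi
    intro r hr
    simp only [hf₂def]
    rw [hDdef, derivWithin_of_mem_nhds (Ici_mem_nhds hr)]
  calc ∫ r in Set.Ioi R₀, (schwarzPot n m r - lam / r ^ 2) * φ r ^ 2 * r ^ k
      = ∫ r in Set.Ioi R₀, f₁ r := rfl
    _ ≤ (∫ r in Set.Ioi R₀, f₁ r) + ∫ r in Set.Ioi R₀, g' r := by
        rw [hFTC]; linarith
    _ = ∫ r in Set.Ioi R₀, (f₁ r + g' r) := (integral_add hf₁int hg'int).symm
    _ ≤ ∫ r in Set.Ioi R₀, f₂ r :=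
        setIntegral_mono_on (hf₁int.add hg'int) hf₂int measurableSet_Ioi hptwise
    _ = ∫ r in Set.Ioi R₀, deriv φ r ^ 2 * r ^ k := hcongr.symm
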